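/- Let φ(z) = z - ln z - 1 and for α ∈ ℝ define Φ(v) = ∫₁ᵛ √φ(z)/z^(α+1) dz. If α < 1/2, then there exist positive constants A₁, A₂ such that |Φ(v)| ≥ A₁ v^(1/2 - α) - A₂ for all v ≥ 1. -/

import Mathlib

open Real Set intervalIntegral MeasureTheory

private lemma contOnF (α : ℝ) :
    ContinuousOn (fun z : ℝ => Real.sqrt (z - Real.log z - 1) / z ^ (α + 1)) (Set.Ioi 0) := by
  apply ContinuousOn.div
  · exact Real.continuous_sqrt.comp_continuousOn
      ((continuousOn_id.sub (Real.continuousOn_log.mono (fun z hz => ne_of_gt hz))).sub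
        continuousOn_const)
  · exact continuousOn_id.rpow_const (fun z hz => Or.inl (ne_of_gt hz))
  · exact fun z hz => (Real.rpow_pos_of_pos hz _).ne'

private lemma intgF (α : ℝ) {a b : ℝ} (ha : 0 < a) (hb : 0 < b) :
    IntervalIntegrable (fun z : ℝ => Real.sqrt (z - Real.log z - 1) / z ^ (α + 1))
      MeasureTheory.volume a b := by
  apply ContinuousOn.intervalIntegrable
  apply (contOnF α).mono
  intro z hz
  rw [Set.mem_uIcc] at hz
  rcases hz with ⟨h1, _⟩ | ⟨h1, _⟩ <;> exact lt_of_lt_of_le (by assumption) h1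

private lemma pointwiseF (α : ℝ) {z : ℝ} (hz : 16 ≤ z) :
    (Real.sqrt 2)⁻¹ * z ^ (-(1/2 : ℝ) - α) ≤ Real.sqrt (z - Real.log z - 1) / z ^ (α + 1) := by
  have hz0 : (0:ℝ) < z := by linarith
  have hs4 : (4:ℝ) ≤ Real.sqrt z := by
    have h := Real.sqrt_le_sqrt (show (16:ℝ) ≤ z from hz)
    rwa [show (16:ℝ) = 4^2 by norm_num, Real.sqrt_sq (by norm_num : (0:ℝ) ≤ 4)] at h
  have hsq : Real.sqrt z ^ 2 = z := Real.sq_sqrt hz0.le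
  have hlog : Real.log z = 2 * Real.log (Real.sqrt z) := by
    rw [Real.log_sqrt hz0.le]; ring
  have hls : Real.log (Real.sqrt z) ≤ Real.sqrt z - 1 :=
    Real.log_le_sub_one_of_pos (Real.sqrt_pos.mpr hz0)
  have hphi : z / 2 ≤ z - Real.log z - 1 := by nlinarith
  have h1 : Real.sqrt (z/2) ≤ Real.sqrt (z - Real.log z - 1) := Real.sqrt_le_sqrt hphi
  have h2 : Real.sqrt (z/2) = Real.sqrt z / Real.sqrt 2 := Real.sqrt_div hz0.le 2
  have hzp : (0:ℝ) < z ^ (α + 1) := Real.rpow_pos_of_pos hz0 _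
  have h3 : (Real.sqrt 2)⁻¹ * z ^ (-(1/2 : ℝ) - α) = Real.sqrt (z/2) / z ^ (α + 1) := by
    rw [h2, show (-(1/2 : ℝ) - α) = 1/2 - (α + 1) by ring, Real.rpow_sub hz0,
      ← Real.sqrt_eq_rpow]
    field_simp
  rw [h3]
  exact div_le_div_of_nonneg_right h1 hzp.le

theorem Phi_growth_atTop (α : ℝ) (hα : α < 1 / 2) :
    ∃ A₁ A₂ : ℝ, 0 < A₁ ∧ 0 < A₂ ∧
      ∀ v : ℝ, 1 ≤ v →
        A₁ * v ^ (1 / 2 - α) - A₂ ≤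
          |∫ z in (1:ℝ)..v, Real.sqrt (z - Real.log z - 1) / z ^ (α + 1)| := by
  have hβ : (0:ℝ) < 1/2 - α := by linarith
  have hs2 : (0:ℝ) < Real.sqrt 2 := Real.sqrt_pos.mpr (by norm_num)
  refine ⟨(Real.sqrt 2 * (1/2 - α))⁻¹, (Real.sqrt 2 * (1/2 - α))⁻¹ * 16 ^ (1/2 - α),
    by positivity, by positivity, ?_⟩
  intro v hv
  have hnn : ∀ a b : ℝ, 1 ≤ a → a ≤ b →
      0 ≤ ∫ z in a..b, Real.sqrt (z - Real.log z - 1) / z ^ (α + 1) := by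
    intro a b ha hab
    apply intervalIntegral.integral_nonneg hab
    intro z hz
    have hz0 : (0:ℝ) < z := lt_of_lt_of_le (by linarith : (0:ℝ) < a) hz.1
    exact div_nonneg (Real.sqrt_nonneg _) (Real.rpow_pos_of_pos hz0 _).le
  rw [abs_of_nonneg (hnn 1 v le_rfl hv)]
  by_cases hv16 : v ≤ 16
  · have h1 : v ^ (1/2 - α) ≤ (16:ℝ) ^ (1/2 - α) :=
      Real.rpow_le_rpow (by linarith) hv16 hβ.le
    have h2 : (Real.sqrt 2 * (1/2 - α))⁻¹ * v ^ (1/2 - α) ≤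
        (Real.sqrt 2 * (1/2 - α))⁻¹ * 16 ^ (1/2 - α) := by
      apply mul_le_mul_of_nonneg_left h1 (by positivity)
    linarith [hnn 1 v le_rfl hv]
  · push_neg at hv16
    have hsplit : (∫ z in (1:ℝ)..v, Real.sqrt (z - Real.log z - 1) / z ^ (α + 1)) =
        (∫ z in (1:ℝ)..16, Real.sqrt (z - Real.log z - 1) / z ^ (α + 1)) +
        ∫ z in (16:ℝ)..v, Real.sqrt (z - Real.log z - 1) / z ^ (α + 1) :=
      (intervalIntegral.integral_add_adjacent_intervals
        (intgF α one_pos (by norm_num)) (intgF α (by norm_num) (by linarith))).symm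
    have hgint : IntervalIntegrable (fun z : ℝ => (Real.sqrt 2)⁻¹ * z ^ (-(1/2 : ℝ) - α))
        MeasureTheory.volume 16 v := by
      apply ContinuousOn.intervalIntegrable
      apply ContinuousOn.mul continuousOn_const
      apply ContinuousOn.rpow_const continuousOn_id
      intro z hz
      rw [Set.mem_uIcc] at hz
      left
      rcases hz with ⟨h1, _⟩ | ⟨h1, _⟩ <;> · intro h; simp only [id_eq] at h; linarith
    have hmono : (∫ z in (16:ℝ)..v, (Real.sqrt 2)⁻¹ * z ^ (-(1/2 : ℝ) - α)) ≤
        ∫ z in (16:ℝ)..v, Real.sqrt (z - Real.log z - 1) / z ^ (α + 1) := by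
      apply intervalIntegral.integral_mono_on hv16.le hgint (intgF α (by norm_num) (by linarith))
      intro z hz
      exact pointwiseF α hz.1
    have hcalc : (∫ z in (16:ℝ)..v, (Real.sqrt 2)⁻¹ * z ^ (-(1/2 : ℝ) - α)) =
        (Real.sqrt 2)⁻¹ * ((v ^ (1/2 - α) - 16 ^ (1/2 - α)) / (1/2 - α)) := by
      rw [intervalIntegral.integral_const_mul, integral_rpow (Or.inl (by linarith)),
        show (-(1/2:ℝ) - α + 1) = 1/2 - α by ring]
    have hfin : (Real.sqrt 2 * (1/2 - α))⁻¹ * v ^ (1/2 - α) -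
        (Real.sqrt 2 * (1/2 - α))⁻¹ * 16 ^ (1/2 - α) ≤
        ∫ z in (16:ℝ)..v, Real.sqrt (z - Real.log z - 1) / z ^ (α + 1) := by
      refine le_trans (le_of_eq ?_) (hcalc ▸ hmono)
      have hβne : (1/2 - α) ≠ 0 := hβ.ne'
      have hs2ne : Real.sqrt 2 ≠ 0 := hs2.ne'
      field_simp
    have h0 : 0 ≤ ∫ z in (1:ℝ)..16, Real.sqrt (z - Real.log z - 1) / z ^ (α + 1) :=
      hnn 1 16 le_rfl (by norm_num)
    rw [hsplit]
    linarith
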